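/- If ω is diophantine in the sense that |qω − p| ≥ γ/|q|^τ for all nonzero integers q and all integers p, then for all (j,k) with (j,k) ≠ (1,1), (j,k) ≠ (0,0), and |j|+|k| < L₀, the determinant satisfies |2(k²−j²)ω + (k⁴−j²)| ≥ c·γ/L₀^{2τ} for a constant c > 0 depending only on τ. -/
import Mathlib


open Real

/-- If ω is diophantine (`|qω − p| ≥ γ/|q|^τ` for all integers `p` and nonzero `q`),
then for all `(j,k) ∉ {(1,1),(0,0)}` with `|j|+|k| < L₀`, the determinant satisfies
`|2(k²−j²)ω + (k⁴−j²)| ≥ cγ/L₀^{2τ}` with `c > 0` depending only on `τ`. -/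
theorem stmt_9 (τ : ℝ) (hτ : 1 ≤ τ) :
    ∃ c : ℝ, 0 < c ∧
      ∀ (γ ω : ℝ) (L₀ : ℝ) (j k : ℕ),
        0 < γ → 0 < ω → 2 ≤ L₀ →
        (∀ (p q : ℤ), q ≠ 0 → γ / (|q| : ℝ)^τ ≤ |(q : ℝ) * ω - (p : ℝ)|) →
        (j : ℝ) + (k : ℝ) < L₀ →
        (j, k) ≠ (1, 1) → (j, k) ≠ (0, 0) →
        c * γ / L₀^(2*τ) ≤ |2 * ((k : ℝ)^2 - (j : ℝ)^2) * ω + ((k : ℝ)^4 - (j : ℝ)^2)| := by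
  refine ⟨(1/2 : ℝ)^τ, Real.rpow_pos_of_pos (by norm_num) τ, ?_⟩
  intro γ ω L₀ j k hγ hω hL₀ hdio hjk h11 h00
  have hτ0 : (0:ℝ) ≤ τ := le_trans zero_le_one hτ
  have hL0 : (0:ℝ) < L₀ := by linarith
  have hc1 : (1/2 : ℝ)^τ ≤ 1 := Real.rpow_le_one (by norm_num) (by norm_num) hτ0
  have hLpow1 : (1:ℝ) ≤ L₀^(2*τ) := Real.one_le_rpow (by linarith) (by linarith)
  have hLpow0 : (0:ℝ) < L₀^(2*τ) := by linarith
  have hγhalf : γ ≤ 1/2 := by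
    have h1 := hdio ⌊ω⌋ 1 one_ne_zero
    have h2 := hdio (⌊ω⌋+1) 1 one_ne_zero
    have hf1 : (⌊ω⌋:ℝ) ≤ ω := Int.floor_le ω
    have hf2 : ω < ⌊ω⌋ + 1 := Int.lt_floor_add_one ω
    simp only [abs_one, Real.one_rpow, Int.cast_one, one_mul, div_one] at h1 h2
    rw [abs_of_nonneg (by linarith)] at h1
    rw [abs_of_nonpos (by push_cast; linarith)] at h2
    push_cast at h2
    linarith
  by_cases hjk2 : j = k
  · subst hjk2
    have hk2 : 2 ≤ j := by
      by_contra h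
      push_neg at h
      interval_cases j <;> simp_all
    have hj2 : (2:ℝ) ≤ (j:ℝ) := by exact_mod_cast hk2
    have hsq4 : (4:ℝ) ≤ (j:ℝ)^2 := by nlinarith
    have h12 : (12:ℝ) ≤ (j:ℝ)^4 - (j:ℝ)^2 := by nlinarith [sq_nonneg ((j:ℝ)^2 - 4)]
    have habs : |2 * ((j:ℝ)^2 - (j:ℝ)^2) * ω + ((j:ℝ)^4 - (j:ℝ)^2)| = (j:ℝ)^4 - (j:ℝ)^2 := by
      rw [sub_self, mul_zero, zero_mul, zero_add, abs_of_nonneg (by linarith)]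
    rw [habs]
    have hle : (1/2:ℝ)^τ * γ / L₀^(2*τ) ≤ γ := by
      rw [div_le_iff₀ hLpow0]
      nlinarith [hγ.le]
    linarith
  · set q : ℤ := 2*((k:ℤ)^2 - (j:ℤ)^2) with hqdef
    have hq : q ≠ 0 := by
      intro h
      apply hjk2
      have hsq : (j:ℤ)^2 = (k:ℤ)^2 := by linarith [hqdef ▸ h]
      have : j^2 = k^2 := by exact_mod_cast hsq
      exact Nat.pow_left_injective (by norm_num) this
    have h := hdio ((j:ℤ)^2 - (k:ℤ)^4) q hq
    have heq : |(q:ℝ) * ω - (((j:ℤ)^2 - (k:ℤ)^4 : ℤ) : ℝ)|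
        = |2 * ((k : ℝ)^2 - (j : ℝ)^2) * ω + ((k : ℝ)^4 - (j : ℝ)^2)| := by
      congr 1
      push_cast [hqdef]
      ring
    rw [heq] at h
    -- bound |q| ≤ 2 * L₀^2
    have hqabs : |(q:ℝ)| ≤ 2 * L₀^2 := by
      have hj0 : (0:ℝ) ≤ (j:ℝ) := Nat.cast_nonneg j
      have hk0 : (0:ℝ) ≤ (k:ℝ) := Nat.cast_nonneg k
      have hqr : (q:ℝ) = 2*((k:ℝ)^2 - (j:ℝ)^2) := by push_cast [hqdef]; ring
      rcases abs_cases ((q:ℝ)) with ⟨he, _⟩ | ⟨he, _⟩ <;> rw [he, hqr] <;> nlinarith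
    have hq1 : (1:ℝ) ≤ |(q:ℝ)| := by
      have := Int.one_le_abs hq
      calc (1:ℝ) ≤ ((|q| : ℤ) : ℝ) := by exact_mod_cast this
        _ = |(q:ℝ)| := by push_cast; ring
    have hqpow0 : (0:ℝ) < |(q:ℝ)|^τ := Real.rpow_pos_of_pos (by linarith) τ
    have hpow : |(q:ℝ)|^τ ≤ 2^τ * L₀^(2*τ) := by
      have h1 : |(q:ℝ)|^τ ≤ (2*L₀^2)^τ :=
        Real.rpow_le_rpow (abs_nonneg _) hqabs hτ0
      have h2 : ((2:ℝ)*L₀^2)^τ = 2^τ * L₀^(2*τ) := by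
        rw [Real.mul_rpow (by norm_num) (by positivity), ← Real.rpow_natCast L₀ 2,
          ← Real.rpow_mul hL0.le]
        norm_num
      linarith [h2 ▸ h1]
    have hc2 : (1/2:ℝ)^τ * 2^τ = 1 := by
      rw [← Real.mul_rpow (by norm_num) (by norm_num)]
      norm_num
    refine le_trans ?_ h
    rw [div_le_div_iff₀ hLpow0 hqpow0]
    have hkey : (1/2:ℝ)^τ * |(q:ℝ)|^τ ≤ L₀^(2*τ) := by
      have hcpos : (0:ℝ) < (1/2:ℝ)^τ := Real.rpow_pos_of_pos (by norm_num) τ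
      calc (1/2:ℝ)^τ * |(q:ℝ)|^τ ≤ (1/2:ℝ)^τ * (2^τ * L₀^(2*τ)) := by
            exact mul_le_mul_of_nonneg_left hpow hcpos.le
        _ = L₀^(2*τ) := by rw [← mul_assoc, hc2, one_mul]
    nlinarith [hγ.le]
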